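/- Let w be any one of the four Chebyshev weights and 0<m<n integers. Then the polynomials q_{n,j}^m(w,·), j=0,…,n−1, are pairwise orthogonal with respect to w: ∫_{−1}^1 q_{n,j}^m(w,x)·q_{n,i}^m(w,x)·w(x) dx = 0 for all i≠j with 0≤i,j≤n−1. -/
import Mathlib


open Real Set Finset Polynomial

noncomputable section

/-- The four kinds of Chebyshev weights. -/
inductive ChebKind | one | two | three | four

/-- The Chebyshev weight function of each kind. -/
noncomputable def wFn : ChebKind → ℝ → ℝ
  | .one,   x => 1 / Real.sqrt (1 - x ^ 2)
  | .two,   x => Real.sqrt (1 - x ^ 2)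
  | .three, x => Real.sqrt ((1 + x) / (1 - x))
  | .four,  x => Real.sqrt ((1 - x) / (1 + x))

/-- The orthonormal polynomials associated with each Chebyshev weight
(`p_j(w,·)`), expressed via Mathlib's Chebyshev polynomials of the first and
second kind.  On `[-1,1]` these coincide with the usual trigonometric forms. -/
noncomputable def pPoly : ChebKind → ℕ → Polynomial ℝ
  | .one, 0       => Polynomial.C (1 / Real.sqrt π)
  | .one, (j + 1) => Polynomial.C (Real.sqrt (2 / π)) * Polynomial.Chebyshev.T ℝ ((j : ℤ) + 1)
  | .two, j       => Polynomial.C (Real.sqrt (2 / π)) * Polynomial.Chebyshev.U ℝ (j : ℤ)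
  | .three, j     => Polynomial.C (1 / Real.sqrt π) *
      (Polynomial.Chebyshev.U ℝ (j : ℤ) - Polynomial.Chebyshev.U ℝ ((j : ℤ) - 1))
  | .four, j      => Polynomial.C (1 / Real.sqrt π) *
      (Polynomial.Chebyshev.U ℝ (j : ℤ) + Polynomial.Chebyshev.U ℝ ((j : ℤ) - 1))

noncomputable def pEval (w : ChebKind) (j : ℕ) (x : ℝ) : ℝ := (pPoly w j).eval x

/-- Angular Chebyshev nodes `t_k^n`. -/
noncomputable def tNode : ChebKind → ℕ → ℕ → ℝ
  | .one,   n, k => (2 * (k : ℝ) - 1) * π / (2 * n)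
  | .two,   n, k => (k : ℝ) * π / (n + 1)
  | .three, n, k => (2 * (k : ℝ) - 1) * π / (2 * n + 1)
  | .four,  n, k => 2 * (k : ℝ) * π / (2 * n + 1)

/-- Chebyshev nodes `x_k^n = cos t_k^n`, zeros of `p_n(w,·)`. -/
noncomputable def xNode (w : ChebKind) (n k : ℕ) : ℝ := Real.cos (tNode w n k)

/-- Christoffel numbers `λ_k^n`. -/
noncomputable def lam : ChebKind → ℕ → ℕ → ℝ
  | .one,   n, _ => π / n
  | .two,   n, k => π / (n + 1) * Real.sin (tNode .two n k) ^ 2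
  | .three, n, k => 4 * π / (2 * n + 1) * Real.cos (tNode .three n k / 2) ^ 2
  | .four,  n, k => 4 * π / (2 * n + 1) * Real.sin (tNode .four n k / 2) ^ 2

/-- de la Vallée Poussin filter coefficients `μ_{n,j}^m`. -/
noncomputable def mufilt (n m j : ℕ) : ℝ :=
  if j ≤ n - m then 1 else ((n : ℝ) + m - j) / (2 * m)

/-- Fundamental VP polynomials `Φ_{n,k}^m(w;x)`. -/
noncomputable def Phi (w : ChebKind) (n m k : ℕ) (x : ℝ) : ℝ :=
  lam w n k * ∑ j ∈ Finset.range (n + m), mufilt n m j * pEval w j (xNode w n k) * pEval w j x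

/-- The VP interpolation polynomial `V_n^m f`. -/
noncomputable def VP (w : ChebKind) (n m : ℕ) (f : ℝ → ℝ) (x : ℝ) : ℝ :=
  ∑ k ∈ Finset.Icc 1 n, f (xNode w n k) * Phi w n m k x

/-- Jacobi weight `u(x) = (1-x)^γ (1+x)^δ`. -/
noncomputable def jac (γ δ : ℝ) (x : ℝ) : ℝ := (1 - x) ^ γ * (1 + x) ^ δ

/-- Weighted uniform norm `‖f·u‖ = max_{|x|≤1} |f(x) u(x)|`. -/
noncomputable def wnorm (γ δ : ℝ) (f : ℝ → ℝ) : ℝ :=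
  sSup ((fun x => |f x * jac γ δ x|) '' Set.Icc (-1 : ℝ) 1)

/-- Error of best weighted polynomial approximation `E_n(f)_u`. -/
noncomputable def bestE (γ δ : ℝ) (n : ℕ) (f : ℝ → ℝ) : ℝ :=
  sInf ((fun P : Polynomial ℝ => wnorm γ δ (fun x => f x - P.eval x)) ''
    {P : Polynomial ℝ | P.natDegree ≤ n})

/-- Membership in the space `C^0_u`: `f` is continuous on compact subsets of
`(-1,1)`, `f·u` extends continuously to `[-1,1]`, with value (= limit) `0` at
`±1` when the corresponding exponent is positive. -/
def MemC0 (γ δ : ℝ) (f : ℝ → ℝ) : Prop :=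
  ContinuousOn f (Set.Ioo (-1 : ℝ) 1) ∧
  ContinuousOn (fun x => f x * jac γ δ x) (Set.Icc (-1 : ℝ) 1) ∧
  (0 < γ → f 1 * jac γ δ 1 = 0) ∧ (0 < δ → f (-1) * jac γ δ (-1) = 0)

/-- Conditions (hp-u) on the exponents of `u=(1-x)^γ(1+x)^δ` relative to `w`. -/
def hpu : ChebKind → ℝ → ℝ → Prop
  | .one,   γ, δ => 0 ≤ γ ∧ γ ≤ 1 ∧ 0 ≤ δ ∧ δ ≤ 1
  | .two,   γ, δ => 0 < γ ∧ γ ≤ 3 / 2 ∧ 0 < δ ∧ δ ≤ 3 / 2 ∧ -1 ≤ γ - δ ∧ γ - δ ≤ 1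
  | .three, γ, δ => 0 ≤ γ ∧ γ ≤ 1 ∧ 0 < δ ∧ δ ≤ 3 / 2 ∧ γ - δ ≤ 1 / 2
  | .four,  γ, δ => 0 < γ ∧ γ ≤ 3 / 2 ∧ 0 ≤ δ ∧ δ ≤ 1 ∧ -(1 / 2) ≤ γ - δ

/-- `φ(x) = sqrt(1-x²)`. -/
noncomputable def phi (x : ℝ) : ℝ := Real.sqrt (1 - x ^ 2)

/-- The set of values `|f^{(r)}(x)| φ(x)^r u(x)`, `x ∈ (-1,1)`. -/
noncomputable def derSet (γ δ : ℝ) (r : ℕ) (f : ℝ → ℝ) : Set ℝ :=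
  (fun x : ℝ => |iteratedDerivWithin r f (Set.Ioo (-1 : ℝ) 1) x| * phi x ^ r * jac γ δ x) ''
    Set.Ioo (-1 : ℝ) 1

/-- Membership in the Sobolev-type space `W_r(u)`. -/
def MemW (γ δ : ℝ) (r : ℕ) (f : ℝ → ℝ) : Prop :=
  MemC0 γ δ f ∧ ContDiffOn ℝ r f (Set.Ioo (-1 : ℝ) 1) ∧ BddAbove (derSet γ δ r f)

/-- The norm of `W_r(u)`: `‖fu‖ + ‖f^{(r)} φ^r u‖`. -/
noncomputable def Wnorm (γ δ : ℝ) (r : ℕ) (f : ℝ → ℝ) : ℝ :=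
  wnorm γ δ f + sSup (derSet γ δ r f)

/-- The set of values `(n+1)^r E_n(f)_u`, `n ≥ 1`. -/
noncomputable def zSet (γ δ r : ℝ) (f : ℝ → ℝ) : Set ℝ :=
  (fun n : ℕ => ((n : ℝ) + 1) ^ r * bestE γ δ n f) '' {n : ℕ | 1 ≤ n}

/-- Membership in the Hölder–Zygmund space `Z_r(u)`. -/
def MemZ (γ δ r : ℝ) (f : ℝ → ℝ) : Prop := MemC0 γ δ f ∧ BddAbove (zSet γ δ r f)

/-- The norm of `Z_r(u)`: `‖fu‖ + sup_{n≥1} (n+1)^r E_n(f)_u`. -/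
noncomputable def Znorm (γ δ r : ℝ) (f : ℝ → ℝ) : ℝ :=
  wnorm γ δ f + sSup (zSet γ δ r f)

/-- Exponents `(γ,δ)` of the weight `u = sqrt(w·φ)`. -/
def uExp : ChebKind → ℝ × ℝ
  | .one => (0, 0) | .two => (1 / 2, 1 / 2) | .three => (0, 1 / 2) | .four => (1 / 2, 0)

/-- The constant `C_w`. -/
def Cw : ChebKind → ℝ | .one => 2 | _ => 1

/-- The quantity `n_w`. -/
noncomputable def nw : ChebKind → ℕ → ℝ
  | .one, n => n | .two, n => n + 1
  | .three, n => (2 * (n : ℝ) + 1) / 2 | .four, n => (2 * (n : ℝ) + 1) / 2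

/-- The quantity `m_w`. -/
noncomputable def mw : ChebKind → ℕ → ℕ → ℝ
  | .one, n, m => (n : ℝ) + m | .two, n, m => (n : ℝ) + m
  | .three, n, m => 2 * ((n : ℝ) + m) - 1 | .four, n, m => 2 * ((n : ℝ) + m) - 1

/-- The polynomials `q_{n,j}^m(w,·)` (orthogonal VP basis). -/
noncomputable def qq (w : ChebKind) (n m j : ℕ) (x : ℝ) : ℝ :=
  if j ≤ n - m then pEval w j x
  else ((m : ℝ) + n - j) / (2 * m) * pEval w j x
    - ((m : ℝ) + j - n) / (2 * m) * pEval w (2 * n - j) x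

end

section Aux2
open Real Set MeasureTheory

lemma pEval_one_zero (x : ℝ) : pEval .one 0 x = 1 / Real.sqrt π := by
  simp [pEval, pPoly]

lemma pEval_one_succ (j : ℕ) (t : ℝ) :
    pEval .one (j+1) (Real.cos t) = Real.sqrt (2/π) * Real.cos (((j:ℝ)+1) * t) := by
  have h := Polynomial.Chebyshev.T_real_cos t ((j:ℤ)+1)
  simp only [pEval, pPoly, Polynomial.eval_mul, Polynomial.eval_C, h]
  norm_num

lemma pEval_two_sin (a : ℕ) (t : ℝ) :
    pEval .two a (Real.cos t) * Real.sin t = Real.sqrt (2/π) * Real.sin (((a:ℝ)+1) * t) := by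
  have h := Polynomial.Chebyshev.U_real_cos t (a:ℤ)
  simp only [pEval, pPoly, Polynomial.eval_mul, Polynomial.eval_C]
  rw [mul_assoc, h]
  norm_num

lemma pEval_three_sin (a : ℕ) (t : ℝ) :
    pEval .three a (Real.cos t) * Real.sin t
      = 1/Real.sqrt π * (Real.sin (((a:ℝ)+1) * t) - Real.sin ((a:ℝ) * t)) := by
  have h1 := Polynomial.Chebyshev.U_real_cos t (a:ℤ)
  have h2 := Polynomial.Chebyshev.U_real_cos t ((a:ℤ)-1)
  simp only [pEval, pPoly, Polynomial.eval_mul, Polynomial.eval_C, Polynomial.eval_sub]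
  rw [mul_assoc, sub_mul, h1, h2]
  push_cast
  norm_num [show ((a:ℝ) - 1 + 1) = (a:ℝ) by ring]

lemma pEval_four_sin (a : ℕ) (t : ℝ) :
    pEval .four a (Real.cos t) * Real.sin t
      = 1/Real.sqrt π * (Real.sin (((a:ℝ)+1) * t) + Real.sin ((a:ℝ) * t)) := by
  have h1 := Polynomial.Chebyshev.U_real_cos t (a:ℤ)
  have h2 := Polynomial.Chebyshev.U_real_cos t ((a:ℤ)-1)
  simp only [pEval, pPoly, Polynomial.eval_mul, Polynomial.eval_C, Polynomial.eval_add]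
  rw [mul_assoc, add_mul, h1, h2]
  push_cast
  norm_num [show ((a:ℝ) - 1 + 1) = (a:ℝ) by ring]

lemma wFn_one_cos {t : ℝ} (ht : t ∈ Set.Ioo 0 π) :
    wFn .one (Real.cos t) = 1 / Real.sin t := by
  have hs := Real.sin_pos_of_mem_Ioo ht
  simp only [wFn]
  rw [show (1 - Real.cos t ^ 2) = Real.sin t ^ 2 from by
        linear_combination -Real.sin_sq_add_cos_sq t,
      Real.sqrt_sq hs.le]

lemma wFn_two_cos {t : ℝ} (ht : t ∈ Set.Ioo 0 π) :
    wFn .two (Real.cos t) = Real.sin t := by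
  have hs := Real.sin_pos_of_mem_Ioo ht
  simp only [wFn]
  rw [show (1 - Real.cos t ^ 2) = Real.sin t ^ 2 from by
        linear_combination -Real.sin_sq_add_cos_sq t,
      Real.sqrt_sq hs.le]

lemma wFn_three_cos {t : ℝ} (ht : t ∈ Set.Ioo 0 π) :
    wFn .three (Real.cos t) = (1 + Real.cos t) / Real.sin t := by
  have hs := Real.sin_pos_of_mem_Ioo ht
  have hp := Real.sin_sq_add_cos_sq t
  have hC1 : Real.cos t < 1 := by nlinarith
  have hC2 : -1 < Real.cos t := by nlinarith
  simp only [wFn]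
  rw [show (1 + Real.cos t)/(1 - Real.cos t) = ((1 + Real.cos t)/Real.sin t)^2 by
        rw [div_pow, div_eq_div_iff (by linarith) (by positivity)]
        linear_combination (1 + Real.cos t) * hp,
      Real.sqrt_sq (div_nonneg (by linarith) hs.le)]

lemma wFn_four_cos {t : ℝ} (ht : t ∈ Set.Ioo 0 π) :
    wFn .four (Real.cos t) = (1 - Real.cos t) / Real.sin t := by
  have hs := Real.sin_pos_of_mem_Ioo ht
  have hp := Real.sin_sq_add_cos_sq t
  have hC1 : Real.cos t < 1 := by nlinarith
  have hC2 : -1 < Real.cos t := by nlinarith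
  simp only [wFn]
  rw [show (1 - Real.cos t)/(1 + Real.cos t) = ((1 - Real.cos t)/Real.sin t)^2 by
        rw [div_pow, div_eq_div_iff (by linarith) (by positivity)]
        linear_combination (1 - Real.cos t) * hp,
      Real.sqrt_sq (div_nonneg (by linarith) hs.le)]

end Aux2

section Aux3
open Real Set MeasureTheory

lemma trig1 (x y t : ℝ) :
    2 * (Real.cos (x*t) * Real.cos (y*t))
      = Real.cos ((x - y)*t) + Real.cos ((x+y)*t) := by
  rw [show (x - y)*t = x*t - y*t by ring, show (x+y)*t = x*t + y*t by ring,
      Real.cos_sub, Real.cos_add]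
  ring

lemma trig2 (x y t : ℝ) :
    2 * (Real.sin ((x+1)*t) * Real.sin ((y+1)*t))
      = Real.cos ((x - y)*t) - Real.cos ((x+y+2)*t) := by
  rw [show (x - y)*t = (x+1)*t - (y+1)*t by ring,
      show (x+y+2)*t = (x+1)*t + (y+1)*t by ring, Real.cos_sub, Real.cos_add]
  ring

lemma trig3 (x y t : ℝ) :
    (Real.sin ((x+1)*t) - Real.sin (x*t)) * (Real.sin ((y+1)*t) - Real.sin (y*t))
      = (Real.cos ((x - y)*t) + Real.cos ((x+y+1)*t)) * (1 - Real.cos t) := by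
  rw [show (x+1)*t = x*t + t by ring, show (y+1)*t = y*t + t by ring,
      show (x - y)*t = x*t - y*t by ring,
      show (x+y+1)*t = (x*t + y*t) + t by ring,
      Real.sin_add, Real.sin_add, Real.cos_sub, Real.cos_add, Real.cos_add, Real.sin_add]
  linear_combination (Real.cos (x*t) * Real.cos (y*t)) * Real.sin_sq_add_cos_sq t

lemma trig4 (x y t : ℝ) :
    (Real.sin ((x+1)*t) + Real.sin (x*t)) * (Real.sin ((y+1)*t) + Real.sin (y*t))
      = (Real.cos ((x - y)*t) - Real.cos ((x+y+1)*t)) * (1 + Real.cos t) := by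
  rw [show (x+1)*t = x*t + t by ring, show (y+1)*t = y*t + t by ring,
      show (x - y)*t = x*t - y*t by ring,
      show (x+y+1)*t = (x*t + y*t) + t by ring,
      Real.sin_add, Real.sin_add, Real.cos_sub, Real.cos_add, Real.cos_add, Real.sin_add]
  linear_combination (Real.cos (x*t) * Real.cos (y*t)) * Real.sin_sq_add_cos_sq t

lemma G_form (w : ChebKind) (a b : ℕ) (hab : a ≠ b) :
    ∃ (c d : ℝ) (k l : ℤ), k ≠ 0 ∧ l ≠ 0 ∧
      ∀ t ∈ Set.Ioo (0:ℝ) π,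
        Real.sin t * (pEval w a (Real.cos t) * pEval w b (Real.cos t) * wFn w (Real.cos t))
          = c * Real.cos ((k:ℝ) * t) + d * Real.cos ((l:ℝ) * t) := by
  have hc1 : (1/Real.sqrt π) * (1/Real.sqrt π) = 1/π := by
    rw [div_mul_div_comm, one_mul, Real.mul_self_sqrt Real.pi_pos.le]
  have hc2 : Real.sqrt (2/π) * Real.sqrt (2/π) = 2/π :=
    Real.mul_self_sqrt (by positivity)
  cases w with
  | one =>
    match a, b, hab with
    | 0, 0, hab => exact absurd rfl hab
    | 0, (jb+1), hab =>
      refine ⟨1/Real.sqrt π * Real.sqrt (2/π), 0, (jb:ℤ)+1, 1, by omega, by omega,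
        fun t ht => ?_⟩
      have hs := Real.sin_pos_of_mem_Ioo ht
      apply mul_right_cancel₀ (b := Real.sin t * Real.sin t) (mul_ne_zero hs.ne' hs.ne')
      have e : ∀ P Q W : ℝ, Real.sin t * (P * Q * W) * (Real.sin t * Real.sin t)
          = (P * Real.sin t) * (Q * Real.sin t) * (W * Real.sin t) := fun P Q W => by ring
      rw [e, pEval_one_zero, pEval_one_succ, wFn_one_cos ht, one_div (Real.sin t),
          inv_mul_cancel₀ hs.ne',
          show (((jb:ℤ)+1 : ℤ):ℝ) * t = ((jb:ℝ)+1)*t by push_cast; ring]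
      ring
    | (ja+1), 0, hab =>
      refine ⟨1/Real.sqrt π * Real.sqrt (2/π), 0, (ja:ℤ)+1, 1, by omega, by omega,
        fun t ht => ?_⟩
      have hs := Real.sin_pos_of_mem_Ioo ht
      apply mul_right_cancel₀ (b := Real.sin t * Real.sin t) (mul_ne_zero hs.ne' hs.ne')
      have e : ∀ P Q W : ℝ, Real.sin t * (P * Q * W) * (Real.sin t * Real.sin t)
          = (P * Real.sin t) * (Q * Real.sin t) * (W * Real.sin t) := fun P Q W => by ring
      rw [e, pEval_one_zero, pEval_one_succ, wFn_one_cos ht, one_div (Real.sin t),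
          inv_mul_cancel₀ hs.ne',
          show (((ja:ℤ)+1 : ℤ):ℝ) * t = ((ja:ℝ)+1)*t by push_cast; ring]
      ring
    | (ja+1), (jb+1), hab =>
      refine ⟨1/π, 1/π, (ja:ℤ) - jb, (ja:ℤ)+jb+2, by omega, by omega, fun t ht => ?_⟩
      have hs := Real.sin_pos_of_mem_Ioo ht
      apply mul_right_cancel₀ (b := Real.sin t * Real.sin t) (mul_ne_zero hs.ne' hs.ne')
      have e : ∀ P Q W : ℝ, Real.sin t * (P * Q * W) * (Real.sin t * Real.sin t)
          = (P * Real.sin t) * (Q * Real.sin t) * (W * Real.sin t) := fun P Q W => by ring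
      rw [e, pEval_one_succ, pEval_one_succ, wFn_one_cos ht, one_div (Real.sin t),
          inv_mul_cancel₀ hs.ne',
          show (((ja:ℤ) - jb : ℤ):ℝ) * t = (((ja:ℝ)+1) - ((jb:ℝ)+1))*t by push_cast; ring,
          show (((ja:ℤ)+jb+2 : ℤ):ℝ) * t = (((ja:ℝ)+1) + ((jb:ℝ)+1))*t by push_cast; ring]
      linear_combination (Real.sin t * Real.sin t * Real.cos (((ja:ℝ)+1)*t)
          * Real.cos (((jb:ℝ)+1)*t)) * hc2
        + (Real.sin t * Real.sin t / π) * trig1 ((ja:ℝ)+1) ((jb:ℝ)+1) t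
  | two =>
    refine ⟨1/π, -(1/π), (a:ℤ) - b, (a:ℤ)+b+2, by omega, by omega, fun t ht => ?_⟩
    have hs := Real.sin_pos_of_mem_Ioo ht
    apply mul_right_cancel₀ (b := Real.sin t * Real.sin t) (mul_ne_zero hs.ne' hs.ne')
    have e : ∀ P Q W : ℝ, Real.sin t * (P * Q * W) * (Real.sin t * Real.sin t)
        = (P * Real.sin t) * (Q * Real.sin t) * (W * Real.sin t) := fun P Q W => by ring
    rw [e, pEval_two_sin, pEval_two_sin, wFn_two_cos ht,
        show (((a:ℤ) - b : ℤ):ℝ) * t = ((a:ℝ) - (b:ℝ))*t by push_cast; ring,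
        show (((a:ℤ)+b+2 : ℤ):ℝ) * t = ((a:ℝ) + (b:ℝ) + 2)*t by push_cast; ring]
    linear_combination (Real.sin t * Real.sin t * Real.sin (((a:ℝ)+1)*t)
        * Real.sin (((b:ℝ)+1)*t)) * hc2
      + (Real.sin t * Real.sin t / π) * trig2 (a:ℝ) (b:ℝ) t
  | three =>
    refine ⟨1/π, 1/π, (a:ℤ) - b, (a:ℤ)+b+1, by omega, by omega, fun t ht => ?_⟩
    have hs := Real.sin_pos_of_mem_Ioo ht
    apply mul_right_cancel₀ (b := Real.sin t * Real.sin t) (mul_ne_zero hs.ne' hs.ne')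
    have e : ∀ P Q W : ℝ, Real.sin t * (P * Q * W) * (Real.sin t * Real.sin t)
        = (P * Real.sin t) * (Q * Real.sin t) * (W * Real.sin t) := fun P Q W => by ring
    rw [e, pEval_three_sin, pEval_three_sin, wFn_three_cos ht,
        div_mul_cancel₀ _ hs.ne',
        show (((a:ℤ) - b : ℤ):ℝ) * t = ((a:ℝ) - (b:ℝ))*t by push_cast; ring,
        show (((a:ℤ)+b+1 : ℤ):ℝ) * t = ((a:ℝ) + (b:ℝ) + 1)*t by push_cast; ring]
    linear_combination ((Real.sin (((a:ℝ)+1)*t) - Real.sin ((a:ℝ)*t))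
          * (Real.sin (((b:ℝ)+1)*t) - Real.sin ((b:ℝ)*t)) * (1 + Real.cos t)) * hc1
      + ((1 + Real.cos t)/π) * trig3 (a:ℝ) (b:ℝ) t
      - ((Real.cos (((a:ℝ) - (b:ℝ))*t) + Real.cos (((a:ℝ) + (b:ℝ) + 1)*t))/π)
          * Real.sin_sq_add_cos_sq t
  | four =>
    refine ⟨1/π, -(1/π), (a:ℤ) - b, (a:ℤ)+b+1, by omega, by omega, fun t ht => ?_⟩
    have hs := Real.sin_pos_of_mem_Ioo ht
    apply mul_right_cancel₀ (b := Real.sin t * Real.sin t) (mul_ne_zero hs.ne' hs.ne')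
    have e : ∀ P Q W : ℝ, Real.sin t * (P * Q * W) * (Real.sin t * Real.sin t)
        = (P * Real.sin t) * (Q * Real.sin t) * (W * Real.sin t) := fun P Q W => by ring
    rw [e, pEval_four_sin, pEval_four_sin, wFn_four_cos ht,
        div_mul_cancel₀ _ hs.ne',
        show (((a:ℤ) - b : ℤ):ℝ) * t = ((a:ℝ) - (b:ℝ))*t by push_cast; ring,
        show (((a:ℤ)+b+1 : ℤ):ℝ) * t = ((a:ℝ) + (b:ℝ) + 1)*t by push_cast; ring]
    linear_combination ((Real.sin (((a:ℝ)+1)*t) + Real.sin ((a:ℝ)*t))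
          * (Real.sin (((b:ℝ)+1)*t) + Real.sin ((b:ℝ)*t)) * (1 - Real.cos t)) * hc1
      + ((1 - Real.cos t)/π) * trig4 (a:ℝ) (b:ℝ) t
      - ((Real.cos (((a:ℝ) - (b:ℝ))*t) - Real.cos (((a:ℝ) + (b:ℝ) + 1)*t))/π)
          * Real.sin_sq_add_cos_sq t

end Aux3

section Aux4
open Real Set MeasureTheory

lemma cos_int_integral (k : ℤ) (hk : k ≠ 0) :
    ∫ t in (0:ℝ)..π, Real.cos ((k:ℝ) * t) = 0 := by
  have hk' : (k:ℝ) ≠ 0 := Int.cast_ne_zero.mpr hk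
  rw [intervalIntegral.integral_comp_mul_left (fun x => Real.cos x) hk']
  simp [Real.sin_int_mul_pi]

lemma image_cos_Ioo : Real.cos '' Set.Ioo 0 π = Set.Ioo (-1:ℝ) 1 := by
  ext y; constructor
  · rintro ⟨t, ht, rfl⟩
    have hs := Real.sin_pos_of_pos_of_lt_pi ht.1 ht.2
    have h1 := Real.sin_sq_add_cos_sq t
    constructor <;> nlinarith
  · intro hy
    refine ⟨Real.arccos y, ⟨Real.arccos_pos.mpr hy.2, lt_of_le_of_ne (Real.arccos_le_pi y) ?_⟩,
      Real.cos_arccos hy.1.le hy.2.le⟩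
    intro h
    have h2 := Real.cos_arccos hy.1.le hy.2.le
    rw [h, Real.cos_pi] at h2
    linarith [hy.1]

lemma subst_integral (g : ℝ → ℝ) :
    ∫ x in Set.Ioo (-1:ℝ) 1, g x = ∫ t in Set.Ioo (0:ℝ) π, |(-Real.sin t)| • g (Real.cos t) := by
  rw [← image_cos_Ioo]
  exact integral_image_eq_integral_abs_deriv_smul measurableSet_Ioo
    (fun x _ => (Real.hasDerivAt_cos x).hasDerivWithinAt)
    (Real.injOn_cos.mono Set.Ioo_subset_Icc_self) g

lemma subst_integrable (g : ℝ → ℝ) :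
    MeasureTheory.IntegrableOn g (Set.Ioo (-1:ℝ) 1) ↔
      MeasureTheory.IntegrableOn (fun t => |(-Real.sin t)| • g (Real.cos t)) (Set.Ioo (0:ℝ) π) := by
  rw [← image_cos_Ioo]
  exact integrableOn_image_iff_integrableOn_abs_deriv_smul measurableSet_Ioo
    (fun x _ => (Real.hasDerivAt_cos x).hasDerivWithinAt)
    (Real.injOn_cos.mono Set.Ioo_subset_Icc_self) g

lemma G_eq (w : ChebKind) (c d : ℝ) (k l : ℤ)
    (hG : ∀ t ∈ Set.Ioo (0:ℝ) π,
        Real.sin t * (pEval w _a (Real.cos t) * pEval w _b (Real.cos t) * wFn w (Real.cos t))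
          = c * Real.cos ((k:ℝ) * t) + d * Real.cos ((l:ℝ) * t)) :
    ∀ t ∈ Set.Ioo (0:ℝ) π,
      |(-Real.sin t)| • (pEval w _a (Real.cos t) * pEval w _b (Real.cos t) * wFn w (Real.cos t))
        = c * Real.cos ((k:ℝ) * t) + d * Real.cos ((l:ℝ) * t) := by
  intro t ht
  rw [abs_neg, abs_of_pos (Real.sin_pos_of_mem_Ioo ht), smul_eq_mul]
  exact hG t ht

lemma contAux (e : ℝ) (r : ℤ) : Continuous fun t : ℝ => e * Real.cos ((r:ℝ) * t) := by
  fun_prop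

lemma portho (w : ChebKind) (a b : ℕ) (hab : a ≠ b) :
    ∫ x in (-1:ℝ)..1, pEval w a x * pEval w b x * wFn w x = 0 := by
  obtain ⟨c, d, k, l, hk, hl, hG⟩ := G_form w a b hab
  rw [intervalIntegral.integral_of_le (by norm_num : (-1:ℝ) ≤ 1),
      MeasureTheory.integral_Ioc_eq_integral_Ioo,
      subst_integral (fun x => pEval w a x * pEval w b x * wFn w x),
      MeasureTheory.setIntegral_congr_fun measurableSet_Ioo (G_eq w c d k l hG),
      ← MeasureTheory.integral_Ioc_eq_integral_Ioo,
      ← intervalIntegral.integral_of_le Real.pi_pos.le,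
      intervalIntegral.integral_add
        ((contAux c k).intervalIntegrable 0 π) ((contAux d l).intervalIntegrable 0 π),
      intervalIntegral.integral_const_mul, intervalIntegral.integral_const_mul,
      cos_int_integral k hk, cos_int_integral l hl]
  ring

lemma pint (w : ChebKind) (a b : ℕ) (hab : a ≠ b) :
    IntervalIntegrable (fun x => pEval w a x * pEval w b x * wFn w x)
      MeasureTheory.volume (-1) 1 := by
  obtain ⟨c, d, k, l, hk, hl, hG⟩ := G_form w a b hab
  rw [intervalIntegrable_iff_integrableOn_Ioo_of_le (by norm_num : (-1:ℝ) ≤ 1),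
      subst_integrable (fun x => pEval w a x * pEval w b x * wFn w x)]
  apply MeasureTheory.Integrable.congr
    (f := fun t => c * Real.cos ((k:ℝ) * t) + d * Real.cos ((l:ℝ) * t))
  · exact ((contAux c k).add (contAux d l)).integrableOn_Icc.mono_set Set.Ioo_subset_Icc_self
  · filter_upwards [MeasureTheory.ae_restrict_mem measurableSet_Ioo] with t ht
    exact (G_eq w c d k l hG t ht).symm

lemma qq_eq (w : ChebKind) (n m j : ℕ) :
    ∃ α β : ℝ, ∀ x, qq w n m j x = α * pEval w j x + β * pEval w (2*n - j) x := by
  by_cases h : j ≤ n - m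
  · exact ⟨1, 0, fun x => by simp [qq, h]⟩
  · exact ⟨((m:ℝ)+n-j)/(2*m), -(((m:ℝ)+j-n)/(2*m)), fun x => by simp [qq, h]; ring⟩

end Aux4


/-- the polynomials `q_{n,j}^m(w,·)`, `j=0,…,n−1`, are pairwise
orthogonal with respect to `w`. -/
theorem stmt15 (w : ChebKind) (n m : ℕ) (hm : 0 < m) (hmn : m < n)
    (i j : ℕ) (hi : i < n) (hj : j < n) (hij : i ≠ j) :
    ∫ x in (-1 : ℝ)..1, qq w n m j x * qq w n m i x * wFn w x = 0 := by
  obtain ⟨α, β, hJ⟩ := qq_eq w n m j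
  obtain ⟨γ, δ, hI⟩ := qq_eq w n m i
  have key : ∀ x, qq w n m j x * qq w n m i x * wFn w x =
      α * γ * (pEval w j x * pEval w i x * wFn w x)
      + α * δ * (pEval w j x * pEval w (2*n - i) x * wFn w x)
      + β * γ * (pEval w (2*n - j) x * pEval w i x * wFn w x)
      + β * δ * (pEval w (2*n - j) x * pEval w (2*n - i) x * wFn w x) :=
    fun x => by rw [hJ, hI]; ring
  have i1 := (pint w j i (by omega)).const_mul (α * γ)
  have i2 := (pint w j (2*n - i) (by omega)).const_mul (α * δ)
  have i3 := (pint w (2*n - j) i (by omega)).const_mul (β * γ)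
  have i4 := (pint w (2*n - j) (2*n - i) (by omega)).const_mul (β * δ)
  simp only [key]
  rw [intervalIntegral.integral_add ((i1.add i2).add i3) i4,
      intervalIntegral.integral_add (i1.add i2) i3,
      intervalIntegral.integral_add i1 i2,
      intervalIntegral.integral_const_mul, intervalIntegral.integral_const_mul,
      intervalIntegral.integral_const_mul, intervalIntegral.integral_const_mul,
      portho w j i (by omega), portho w j (2*n - i) (by omega),
      portho w (2*n - j) i (by omega), portho w (2*n - j) (2*n - i) (by omega)]
  ring
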